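/- A finite-dimensional Lie algebra L of dimension n over a field is abelian if and only if dim M(L) = n(n−1)/2. -/

import Mathlib

open Module

instance Prod.instLieRingBracket (L M : Type*) [LieRing L] [LieRing M] :
    Bracket (L × M) (L × M) :=
  ⟨fun x y => (⁅x.1, y.1⁆, ⁅x.2, y.2⁆)⟩

/-- Direct sum (product) of two Lie rings. -/
instance Prod.instLieRing (L M : Type*) [LieRing L] [LieRing M] : LieRing (L × M) where
  add_lie x y z := by ext <;> simp [Bracket.bracket, add_lie]
  lie_add x y z := by ext <;> simp [Bracket.bracket, lie_add]
  lie_self x := by ext <;> simp [Bracket.bracket]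
  leibniz_lie x y z := by ext <;> simp [Bracket.bracket]

instance Prod.instLieAlgebra (k L M : Type*) [CommRing k] [LieRing L] [LieRing M]
    [LieAlgebra k L] [LieAlgebra k M] : LieAlgebra k (L × M) where
  lie_smul t x y := by ext <;> simp [Bracket.bracket, lie_smul]

section Schur
variable (k : Type*) [Field k] (L : Type*) [LieRing L] [LieAlgebra k L]

/-- The canonical free presentation map `FreeLieAlgebra k L → L`. -/
noncomputable def presPi : FreeLieAlgebra k L →ₗ⁅k⁆ L := FreeLieAlgebra.lift k id

/-- `R ∩ F²` for the canonical free presentation `0 → R → F → L → 0`. -/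
noncomputable def multNum : LieIdeal k (FreeLieAlgebra k L) :=
  (presPi k L).ker ⊓ ⁅(⊤ : LieIdeal k (FreeLieAlgebra k L)), (⊤ : LieIdeal k (FreeLieAlgebra k L))⁆

/-- `[R, F]` for the canonical free presentation. -/
noncomputable def multDen : LieIdeal k (FreeLieAlgebra k L) :=
  ⁅(presPi k L).ker, (⊤ : LieIdeal k (FreeLieAlgebra k L))⁆

/-- The Schur multiplier `M(L) = (R ∩ F²)/[R,F]`, as a Lie algebra (it is abelian). -/
noncomputable def schurMultiplier :=
  (↥(multNum k L)) ⧸ (LieIdeal.comap ((multNum k L) : LieSubalgebra k (FreeLieAlgebra k L)).incl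
    (multDen k L))

noncomputable instance : LieRing (schurMultiplier k L) := by unfold schurMultiplier; infer_instance
noncomputable instance : LieAlgebra k (schurMultiplier k L) := by
  unfold schurMultiplier; infer_instance
noncomputable instance : Module k (schurMultiplier k L) := by
  unfold schurMultiplier; infer_instance

/-- dim M(L). -/
noncomputable def schurMultDim : ℕ := Module.finrank k (schurMultiplier k L)

/-- The derived subalgebra `L² = [L,L]` as an ideal. -/
noncomputable def derivedIdeal : LieIdeal k L := ⁅(⊤ : LieIdeal k L), (⊤ : LieIdeal k L)⁆

end Schur


namespace SchurAux

variable {k : Type*} [Field k] {L : Type*} [LieRing L] [LieAlgebra k L]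

lemma pi_of (x : L) : presPi k L (FreeLieAlgebra.of k x) = x := by
  simp [presPi]

variable (k L) in
/-- quotient map F → F/[R,F] (linear). -/
noncomputable def Qm : FreeLieAlgebra k L →ₗ[k] (FreeLieAlgebra k L ⧸ (multDen k L).toSubmodule) :=
  (multDen k L).toSubmodule.mkQ

lemma Qm_eq_zero {a : FreeLieAlgebra k L} (h : a ∈ multDen k L) : Qm k L a = 0 := by
  simpa [Qm, Submodule.Quotient.mk_eq_zero] using h

lemma Qm_lie_zero_left {a : FreeLieAlgebra k L} (h : presPi k L a = 0) (c : FreeLieAlgebra k L) :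
    Qm k L ⁅a, c⁆ = 0 := by
  apply Qm_eq_zero
  unfold multDen
  exact LieSubmodule.lie_mem_lie (LieHom.mem_ker.2 h) (LieSubmodule.mem_top c)

lemma Qm_congr_left {a a' : FreeLieAlgebra k L} (h : presPi k L a = presPi k L a')
    (c : FreeLieAlgebra k L) : Qm k L ⁅a, c⁆ = Qm k L ⁅a', c⁆ := by
  have h0 : Qm k L ⁅a - a', c⁆ = 0 := Qm_lie_zero_left (by simp [map_sub, h]) c
  rw [sub_lie, map_sub, sub_eq_zero] at h0
  exact h0

lemma Qm_congr_right {a a' : FreeLieAlgebra k L} (h : presPi k L a = presPi k L a')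
    (c : FreeLieAlgebra k L) : Qm k L ⁅c, a⁆ = Qm k L ⁅c, a'⁆ := by
  rw [show ⁅c, a⁆ = -⁅a, c⁆ from (lie_skew c a).symm,
    show ⁅c, a'⁆ = -⁅a', c⁆ from (lie_skew c a').symm, map_neg, map_neg, Qm_congr_left h c]

variable (k L) in
/-- The induced bilinear bracket-like map `L → L → F/[R,F]`. -/
noncomputable def beta : L →ₗ[k] L →ₗ[k] (FreeLieAlgebra k L ⧸ (multDen k L).toSubmodule) :=
  LinearMap.mk₂ k (fun x y => Qm k L ⁅FreeLieAlgebra.of k x, FreeLieAlgebra.of k y⁆)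
    (fun x x' y => by
      rw [Qm_congr_left (a' := FreeLieAlgebra.of k x + FreeLieAlgebra.of k x')
        (by simp [pi_of, map_add]) _, add_lie, map_add])
    (fun c x y => by
      rw [Qm_congr_left (a' := c • FreeLieAlgebra.of k x) (by simp [pi_of]) _, smul_lie, map_smul])
    (fun x y y' => by
      rw [Qm_congr_right (a := FreeLieAlgebra.of k (y + y'))
        (a' := FreeLieAlgebra.of k y + FreeLieAlgebra.of k y') (by simp [pi_of, map_add]) _,
        lie_add, map_add])
    (fun c x y => by
      rw [Qm_congr_right (a := FreeLieAlgebra.of k (c • y)) (a' := c • FreeLieAlgebra.of k y)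
        (by simp [pi_of]) _,
        show ⁅FreeLieAlgebra.of k x, c • FreeLieAlgebra.of k y⁆
            = c • ⁅FreeLieAlgebra.of k x, FreeLieAlgebra.of k y⁆ from lie_smul c _ _, map_smul])

lemma beta_apply (x y : L) :
    beta k L x y = Qm k L ⁅FreeLieAlgebra.of k x, FreeLieAlgebra.of k y⁆ := rfl

lemma beta_self (x : L) : beta k L x x = 0 := by
  rw [beta_apply, lie_self, map_zero]

lemma beta_skew (x y : L) : beta k L x y = - beta k L y x := by
  have h := beta_self (k := k) (L := L) (x + y)
  simp only [map_add, LinearMap.add_apply, beta_self] at h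
  rw [eq_neg_iff_add_eq_zero]
  abel_nf at h ⊢
  exact h

lemma Qm_bracket (f g : FreeLieAlgebra k L) :
    Qm k L ⁅f, g⁆ = beta k L (presPi k L f) (presPi k L g) := by
  rw [beta_apply]
  rw [Qm_congr_left (a' := FreeLieAlgebra.of k (presPi k L f)) (by simp [pi_of]) g]
  rw [Qm_congr_right (a' := FreeLieAlgebra.of k (presPi k L g)) (by simp [pi_of]) _]

end SchurAux
namespace SchurAux

variable {k : Type*} [Field k] {L : Type*} [LieRing L] [LieAlgebra k L]

/-- Index type for pairs `i < j`. -/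
abbrev Pn (n : ℕ) := {p : Fin n × Fin n // p.1 < p.2}

variable {n : ℕ}

variable (k L) in
noncomputable def piBar : (FreeLieAlgebra k L ⧸ (multDen k L).toSubmodule) →ₗ[k] L :=
  Submodule.liftQ _ (presPi k L).toLinearMap (by
    intro x hx
    have hx' : x ∈ multDen k L := hx
    have : x ∈ (presPi k L).ker := by
      unfold multDen at hx'
      exact LieSubmodule.lie_le_left _ _ hx'
    simpa [LinearMap.mem_ker] using LieHom.mem_ker.1 this)

lemma piBar_Qm (f : FreeLieAlgebra k L) : piBar k L (Qm k L f) = presPi k L f := by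
  simp [piBar, Qm]

lemma piBar_beta (x y : L) : piBar k L (beta k L x y) = ⁅x, y⁆ := by
  rw [beta_apply, piBar_Qm]
  simp [pi_of]

variable (b : Basis (Fin n) k L)

noncomputable def Sb : Submodule k (FreeLieAlgebra k L ⧸ (multDen k L).toSubmodule) :=
  Submodule.span k (Set.range fun p : Pn n => beta k L (b p.1.1) (b p.1.2))

lemma beta_basis_mem (i j : Fin n) : beta k L (b i) (b j) ∈ Sb b := by
  rcases lt_trichotomy i j with h | h | h
  · exact Submodule.subset_span ⟨⟨(i, j), h⟩, rfl⟩
  · subst h; rw [beta_self]; exact zero_mem _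
  · rw [beta_skew]
    exact neg_mem (Submodule.subset_span ⟨⟨(j, i), h⟩, rfl⟩)

lemma beta_mem (x y : L) : beta k L x y ∈ Sb b := by
  rw [← b.sum_repr x, ← b.sum_repr y]
  simp only [map_sum, map_smul, LinearMap.sum_apply, LinearMap.smul_apply]
  refine Submodule.sum_mem _ fun i _ => Submodule.smul_mem _ _
    (Submodule.sum_mem _ fun j _ => Submodule.smul_mem _ _ (beta_basis_mem b _ _))

noncomputable instance : FiniteDimensional k (Sb b) :=
  FiniteDimensional.span_of_finite k (Set.finite_range _)

lemma finrank_Sb_le : Module.finrank k (Sb b) ≤ Fintype.card (Pn n) :=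
  finrank_range_le_card _

variable (k L) in
noncomputable def Mbar : Submodule k (FreeLieAlgebra k L ⧸ (multDen k L).toSubmodule) :=
  Submodule.map (Qm k L) (multNum k L).toSubmodule

lemma Mbar_le_Sb : Mbar k L ≤ Sb b := by
  have h1 : (multNum k L).toSubmodule ≤
      (⁅(⊤ : LieIdeal k (FreeLieAlgebra k L)), (⊤ : LieIdeal k (FreeLieAlgebra k L))⁆ :
        LieIdeal k (FreeLieAlgebra k L)).toSubmodule := by
    intro x hx
    exact (LieSubmodule.mem_inf _ _ _).1 hx |>.2
  refine le_trans (Submodule.map_mono h1) ?_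
  rw [LieSubmodule.lieIdeal_oper_eq_linear_span', Submodule.map_span]
  rw [Submodule.span_le]
  rintro z ⟨m, ⟨x, -, y, -, rfl⟩, rfl⟩
  rw [Qm_bracket]
  exact beta_mem b _ _

lemma Mbar_le_ker : Mbar k L ≤ LinearMap.ker (piBar k L) := by
  rintro z ⟨m, hm, rfl⟩
  have hm' : m ∈ multNum k L := hm
  unfold multNum at hm'
  have : m ∈ (presPi k L).ker := ((LieSubmodule.mem_inf _ _ _).1 hm').1
  simp [LinearMap.mem_ker, piBar_Qm, LieHom.mem_ker.1 this]

end SchurAux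
namespace SchurAux

variable {k : Type*} [Field k] {L : Type*} [LieRing L] [LieAlgebra k L]

variable (k L) in
noncomputable def gN : (↥(multNum k L)) →ₗ[k] (FreeLieAlgebra k L ⧸ (multDen k L).toSubmodule) :=
  (Qm k L).comp (multNum k L).toSubmodule.subtype

lemma range_gN : LinearMap.range (gN k L) = Mbar k L := by
  rw [gN, LinearMap.range_comp, Submodule.range_subtype, Mbar]

lemma ker_gN : LinearMap.ker (gN k L) =
    (LieIdeal.comap ((multNum k L) : LieSubalgebra k (FreeLieAlgebra k L)).incl
      (multDen k L)).toSubmodule := by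
  ext x
  have h1 : x ∈ LinearMap.ker (gN k L) ↔ (x : FreeLieAlgebra k L) ∈ multDen k L := by
    simp only [gN, Qm, LinearMap.mem_ker, LinearMap.comp_apply, Submodule.mkQ_apply,
      Submodule.Quotient.mk_eq_zero, Submodule.subtype_apply]
    rfl
  rw [h1]
  constructor
  · intro h
    exact h
  · intro h
    exact h

lemma schurDim_eq : schurMultDim k L = Module.finrank k (Mbar k L) := by
  have e1 : ((↥(multNum k L)) ⧸ LinearMap.ker (gN k L)) ≃ₗ[k] Mbar k L :=
    (gN k L).quotKerEquivRange.trans (LinearEquiv.ofEq _ _ range_gN)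
  have e2 : schurMultiplier k L ≃ₗ[k] Mbar k L := by
    unfold schurMultiplier
    let g' : ↥((multNum k L) : LieSubalgebra k (FreeLieAlgebra k L)) →ₗ[k]
        (FreeLieAlgebra k L ⧸ (multDen k L).toSubmodule) := gN k L
    have hk : LinearMap.ker g' = (LieIdeal.comap
        ((multNum k L) : LieSubalgebra k (FreeLieAlgebra k L)).incl (multDen k L)).toSubmodule :=
      ker_gN
    have hr : LinearMap.range g' = Mbar k L := range_gN
    exact (Submodule.quotEquivOfEq _ _ hk.symm).trans
      (g'.quotKerEquivRange.trans (LinearEquiv.ofEq _ _ hr))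
  rw [schurMultDim]
  exact e2.finrank_eq

end SchurAux
namespace SchurAux

variable {k : Type*} [Field k] {L : Type*} [LieRing L] [LieAlgebra k L]

/-- The pairs `i < j` biject with `Σ j, Fin j`. -/
def pnEquiv (n : ℕ) : Pn n ≃ Σ j : Fin n, Fin j.val where
  toFun p := ⟨p.1.2, ⟨p.1.1.val, p.2⟩⟩
  invFun q := ⟨(⟨q.2.val, lt_trans q.2.isLt q.1.isLt⟩, q.1), q.2.isLt⟩
  left_inv p := by
    rcases p with ⟨⟨a, c⟩, h⟩
    simp
  right_inv q := by
    rcases q with ⟨j, i⟩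
    simp

lemma card_Pn (n : ℕ) : Fintype.card (Pn n) = n * (n - 1) / 2 := by
  rw [Fintype.card_congr (pnEquiv n), Fintype.card_sigma]
  simp only [Fintype.card_fin]
  rw [Fin.sum_univ_eq_sum_range (fun i => i) n, Finset.sum_range_id]

variable {n : ℕ} [FiniteDimensional k L]

lemma backward_aux (b : Basis (Fin n) k L) (h : Module.finrank k (Mbar k L) = Fintype.card (Pn n)) : IsLieAbelian L := by
  let g : (Sb b) →ₗ[k] L := (piBar k L).comp (Sb b).subtype
  have hrk : Module.finrank k (LinearMap.range g) + Module.finrank k (LinearMap.ker g)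
      = Module.finrank k (Sb b) := LinearMap.finrank_range_add_finrank_ker g
  have hM' : Submodule.comap (Sb b).subtype (Mbar k L) ≤ LinearMap.ker g := by
    intro x hx
    have hx' : (x : FreeLieAlgebra k L ⧸ (multDen k L).toSubmodule) ∈ Mbar k L := hx
    have := Mbar_le_ker (k := k) (L := L) hx'
    simpa [g, LinearMap.mem_ker] using this
  have hMfin : Module.finrank k (Mbar k L)
      = Module.finrank k (Submodule.comap (Sb b).subtype (Mbar k L)) :=
    ((Submodule.comapSubtypeEquivOfLe (Mbar_le_Sb b)).finrank_eq).symm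
  have h1 : Fintype.card (Pn n) ≤ Module.finrank k (LinearMap.ker g) := by
    rw [← h, hMfin]
    exact Submodule.finrank_mono hM'
  have h2 : Module.finrank k (Sb b) ≤ Fintype.card (Pn n) := finrank_Sb_le b
  have h3 : Module.finrank k (LinearMap.range g) = 0 := by omega
  have h4 : LinearMap.range g = ⊥ := Submodule.finrank_eq_zero.mp h3
  constructor
  intro x y
  have hmem : ⁅x, y⁆ ∈ LinearMap.range g :=
    ⟨⟨beta k L x y, beta_mem b x y⟩, by simp [g, piBar_beta]⟩
  rw [h4] at hmem
  simpa using hmem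

end SchurAux
namespace SchurAux

variable {k : Type*} [Field k] {L : Type*} [LieRing L] [LieAlgebra k L] {n : ℕ}

/-- Underlying type of the free 2-step nilpotent quadratic extension; carries the basis
as a phantom parameter so that the Lie structure can be an instance. -/
def HeiT {n : ℕ} (_b : Basis (Fin n) k L) : Type _ := L × (Pn n → k)

variable (b : Basis (Fin n) k L)

noncomputable instance : AddCommGroup (HeiT b) :=
  inferInstanceAs (AddCommGroup (L × (Pn n → k)))

noncomputable instance : Module k (HeiT b) :=
  inferInstanceAs (Module k (L × (Pn n → k)))

/-- Coordinate wedge of two vectors. -/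
noncomputable def wedge (x y : L) : Pn n → k :=
  fun p => b.repr x p.1.1 * b.repr y p.1.2 - b.repr x p.1.2 * b.repr y p.1.1

lemma wedge_zero_left (y : L) : wedge b 0 y = 0 := by
  funext p; simp [wedge]

noncomputable instance heiBracket : Bracket (HeiT b) (HeiT b) :=
  ⟨fun u v => ((0, wedge b u.1 v.1) : L × (Pn n → k))⟩

noncomputable instance heiLieRing : LieRing (HeiT b) :=
  { instAddCommGroupHeiT b, heiBracket b with
    add_lie := fun u v w => by
      show ((0, wedge b (u.1 + v.1) w.1) : L × (Pn n → k))
        = ((0, wedge b u.1 w.1) : L × (Pn n → k)) + ((0, wedge b v.1 w.1) : L × (Pn n → k))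
      refine Prod.ext (by simp) ?_
      funext p
      simp [wedge, map_add]
      ring
    lie_add := fun u v w => by
      show ((0, wedge b u.1 (v.1 + w.1)) : L × (Pn n → k))
        = ((0, wedge b u.1 v.1) : L × (Pn n → k)) + ((0, wedge b u.1 w.1) : L × (Pn n → k))
      refine Prod.ext (by simp) ?_
      funext p
      simp [wedge, map_add]
      ring
    lie_self := fun u => by
      show ((0, wedge b u.1 u.1) : L × (Pn n → k)) = 0
      refine Prod.ext (by simp) ?_
      funext p
      simp [wedge]
      ring
    leibniz_lie := fun u v w => by
      show ((0, wedge b u.1 (0 : L)) : L × (Pn n → k))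
        = ((0, wedge b (0 : L) w.1) : L × (Pn n → k)) + ((0, wedge b v.1 (0 : L)) : L × (Pn n → k))
      refine Prod.ext (by simp) ?_
      funext p
      simp [wedge] }

noncomputable instance heiLieAlgebra : LieAlgebra k (HeiT b) :=
  { lie_smul := fun c u v => by
      show ((0, wedge b u.1 (c • v.1)) : L × (Pn n → k))
        = c • ((0, wedge b u.1 v.1) : L × (Pn n → k))
      refine Prod.ext (by simp) ?_
      funext p
      simp [wedge, map_smul, smul_eq_mul]
      ring }

end SchurAux
namespace SchurAux

variable {k : Type*} [Field k] {L : Type*} [LieRing L] [LieAlgebra k L] {n : ℕ}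
variable (b : Basis (Fin n) k L)

/-- generators map into `HeiT`. -/
noncomputable def toHei (x : L) : HeiT b := ((x, 0) : L × (Pn n → k))

noncomputable def phiH : FreeLieAlgebra k L →ₗ⁅k⁆ HeiT b :=
  FreeLieAlgebra.lift k (toHei b)

/-- second projection, linear. -/
noncomputable def sndH : HeiT b →ₗ[k] (Pn n → k) where
  toFun u := u.2
  map_add' u v := rfl
  map_smul' c u := rfl

section Abelian
variable (hab : IsLieAbelian L)
include hab

/-- first projection as a Lie homomorphism (needs `L` abelian). -/
noncomputable def fstH : HeiT b →ₗ⁅k⁆ L :=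
  { toFun := fun u => u.1
    map_add' := fun u v => rfl
    map_smul' := fun c u => rfl
    map_lie' := fun {u v} => by
      show (0 : L) = ⁅u.1, v.1⁆
      rw [trivial_lie_zero] }

lemma fst_phiH (f : FreeLieAlgebra k L) : (phiH b f).1 = presPi k L f := by
  have h : (fstH b hab).comp (phiH b) = presPi k L := by
    apply FreeLieAlgebra.hom_ext
    intro x
    simp [phiH, fstH, toHei, pi_of]
    rfl
  exact congrArg (fun F => F f) h

lemma phiH_multDen {d : FreeLieAlgebra k L} (hd : d ∈ multDen k L) : phiH b d = 0 := by
  have hle : (multDen k L).toSubmodule ≤ LinearMap.ker (phiH b).toLinearMap := by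
    rw [multDen, LieSubmodule.lieIdeal_oper_eq_linear_span', Submodule.span_le]
    rintro m ⟨x, hx, y, -, rfl⟩
    have h1 : (phiH b x).1 = 0 := by
      rw [fst_phiH b hab, LieHom.mem_ker.1 hx]
    simp only [SetLike.mem_coe, LinearMap.mem_ker, LieHom.coe_toLinearMap]
    rw [LieHom.map_lie]
    show ((0, wedge b (phiH b x).1 (phiH b y).1) : L × (Pn n → k)) = 0
    rw [h1, wedge_zero_left]
    rfl
  exact hle hd

noncomputable def psiH : (FreeLieAlgebra k L ⧸ (multDen k L).toSubmodule) →ₗ[k] (Pn n → k) :=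
  Submodule.liftQ _ ((sndH b).comp (phiH b).toLinearMap) (by
    intro x hx
    have h0 : phiH b x = 0 := phiH_multDen b hab hx
    have : sndH b (phiH b x) = 0 := by rw [h0]; rfl
    simpa [LinearMap.mem_ker] using this)

lemma psiH_beta (x y : L) : psiH b hab (beta k L x y) = wedge b x y := by
  rw [beta_apply]
  show ((sndH b).comp (phiH b).toLinearMap)
      ⁅FreeLieAlgebra.of k x, FreeLieAlgebra.of k y⁆ = wedge b x y
  simp only [LinearMap.comp_apply, LieHom.coe_toLinearMap, LieHom.map_lie]
  have hx : phiH b (FreeLieAlgebra.of k x) = toHei b x := FreeLieAlgebra.lift_of_apply _ x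
  have hy : phiH b (FreeLieAlgebra.of k y) = toHei b y := FreeLieAlgebra.lift_of_apply _ y
  rw [hx, hy]
  rfl

end Abelian

end SchurAux
namespace SchurAux

variable {k : Type*} [Field k] {L : Type*} [LieRing L] [LieAlgebra k L] {n : ℕ}
variable (b : Basis (Fin n) k L)

lemma wedge_basis (p q : Pn n) :
    wedge b (b p.1.1) (b p.1.2) q = if p = q then (1 : k) else 0 := by
  rcases p with ⟨⟨i, j⟩, hij⟩
  rcases q with ⟨⟨a, c⟩, hac⟩
  dsimp only at hij hac
  simp only [wedge, Basis.repr_self, Finsupp.single_apply, Subtype.mk.injEq, Prod.mk.injEq]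
  have hij' : i.val < j.val := hij
  have hac' : a.val < c.val := hac
  split_ifs
  all_goals try (exfalso; simp only [Fin.ext_iff, not_and] at hij' hac' ⊢ <;> omega)
  all_goals try (exfalso; omega)
  all_goals ring

section Abelian
variable (hab : IsLieAbelian L)
include hab

lemma Sb_le_Mbar : Sb b ≤ Mbar k L := by
  rw [Sb, Submodule.span_le]
  rintro z ⟨p, rfl⟩
  refine ⟨⁅FreeLieAlgebra.of k (b p.1.1), FreeLieAlgebra.of k (b p.1.2)⁆, ?_, rfl⟩
  have hmem : ⁅FreeLieAlgebra.of k (b p.1.1), FreeLieAlgebra.of k (b p.1.2)⁆ ∈ multNum k L := by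
    rw [multNum]
    refine (LieSubmodule.mem_inf _ _ _).2 ⟨LieHom.mem_ker.2 ?_, ?_⟩
    · rw [LieHom.map_lie, pi_of, pi_of, trivial_lie_zero]
    · exact LieSubmodule.lie_mem_lie (LieSubmodule.mem_top _) (LieSubmodule.mem_top _)
  exact hmem

lemma map_psiH_Sb : Submodule.map (psiH b hab) (Sb b) = ⊤ := by
  refine le_antisymm le_top ?_
  intro v _
  rw [pi_eq_sum_univ v]
  refine Submodule.sum_mem _ fun p _ => Submodule.smul_mem _ _ ?_
  refine ⟨beta k L (b p.1.1) (b p.1.2), Submodule.subset_span ⟨p, rfl⟩, ?_⟩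
  rw [psiH_beta]
  funext q
  exact wedge_basis b p q

lemma forward_aux (b : Basis (Fin n) k L) : Module.finrank k (Mbar k L) = Fintype.card (Pn n) := by
  have hSM : Sb b = Mbar k L := le_antisymm (Sb_le_Mbar b hab) (Mbar_le_Sb b)
  rw [← hSM]
  refine le_antisymm (finrank_Sb_le b) ?_
  have h1 : Fintype.card (Pn n) = Module.finrank k ((⊤ : Submodule k (Pn n → k))) := by
    rw [finrank_top, Module.finrank_pi]
  rw [h1, ← map_psiH_Sb b hab]
  exact Submodule.finrank_map_le _ _

end Abelian

end SchurAux

theorem stmt5 (k : Type*) [Field k] (L : Type*) [LieRing L] [LieAlgebra k L]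
    [FiniteDimensional k L] (n : ℕ) (hn : finrank k L = n) :
    IsLieAbelian L ↔ schurMultDim k L = n * (n - 1) / 2 := by
  have b : Basis (Fin n) k L := Module.finBasisOfFinrankEq k L hn
  constructor
  · intro hab
    rw [SchurAux.schurDim_eq, SchurAux.forward_aux (hab := hab) b, SchurAux.card_Pn]
  · intro h
    apply SchurAux.backward_aux b
    rw [SchurAux.card_Pn n, ← h, SchurAux.schurDim_eq]
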